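/- Let n ≥ 2 and k, l be integers, and let j ∈ {0,1,2} with condition indices read mod 3. Then: (i) if (E.j) and (F1.j) both hold then (B.(j+1)) holds; (ii) if (E.j) and (F2.(−j)) both hold then (B.(j+2)) holds; (iii) if additionally none of (B.0), (B.1), (B.2) hold, then (E.j) and (F1.(j+1)) together imply (D.(j+2)), and (E.j) and (F2.(1−j)) together imply (D.(j+1)). -/

import Mathlib

/-- `c ≡ ±n/p (mod n)`: `p` divides `n`, and `c ≡ n/p` or `c ≡ -n/p (mod n)`. -/
def pmMod (n p c : ℤ) : Prop := p ∣ n ∧ (n ∣ (c - n / p) ∨ n ∣ (c + n / p))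

/-- Conditions (B.0), (B.1), (B.2). -/
def condB (n k l : ℤ) : ZMod 3 → Prop := fun j =>
  if j = 0 then n ∣ (2 * k - l) else if j = 1 then n ∣ (2 * l - k) else n ∣ (k + l)

/-- Conditions (C.0), (C.1), (C.2). -/
def condC (n k l : ℤ) : ZMod 3 → Prop := fun j =>
  if j = 0 then pmMod n 3 l else if j = 1 then pmMod n 3 k else pmMod n 3 (k - l)

/-- Conditions (D.0), (D.1), (D.2). -/
def condD (n k l : ℤ) : ZMod 3 → Prop := fun j =>
  if j = 0 then 2 ∣ n ∧ n ∣ (2 * k - l - n / 2)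
  else if j = 1 then 2 ∣ n ∧ n ∣ (2 * l - k - n / 2)
  else 2 ∣ n ∧ n ∣ (k + l - n / 2)

/-- Conditions (E.0), (E.1), (E.2). -/
def condE (n k l : ℤ) : ZMod 3 → Prop := fun j =>
  if j = 0 then pmMod n 3 (2 * k - l) else if j = 1 then pmMod n 3 (2 * l - k)
  else pmMod n 3 (k + l)

/-- Conditions (F1.0), (F1.1), (F1.2). -/
def condF1 (n k l : ℤ) : ZMod 3 → Prop := fun j =>
  if j = 0 then n ∣ (5 * k - l) else if j = 1 then n ∣ (5 * l - 4 * k) else n ∣ (k + 4 * l)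

/-- Conditions (F2.0), (F2.1), (F2.2). -/
def condF2 (n k l : ℤ) : ZMod 3 → Prop := fun j =>
  if j = 0 then n ∣ (4 * l - 5 * k) else if j = 1 then n ∣ (4 * k + l) else n ∣ (5 * l - k)


lemma comb (n x y t a b : ℤ) (hx : n ∣ x) (hy : n ∣ y) (ht : t = a*x + b*y) : n ∣ t :=
  ht ▸ dvd_add (hx.mul_left a) (hy.mul_left b)

lemma three_dvd (n a : ℤ) (h3 : 3 ∣ n) (he : n ∣ (a - n/3) ∨ n ∣ (a + n/3)) : n ∣ 3*a := by
  have hnn : 3*(n/3) = n := Int.mul_ediv_cancel' h3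
  rcases he with h|h
  · have : 3*a = 3*(a - n/3) + n := by rw [mul_sub, hnn]; ring
    rw [this]; exact dvd_add (h.mul_left 3) dvd_rfl
  · have : 3*a = 3*(a + n/3) - n := by rw [mul_add, hnn]; ring
    rw [this]; exact dvd_sub (h.mul_left 3) dvd_rfl

lemma halfD (n t : ℤ) (h2t : n ∣ 2*t) (hnt : ¬ n ∣ t) : 2 ∣ n ∧ n ∣ (t - n/2) := by
  obtain ⟨m, hm⟩ := h2t
  rcases Int.even_or_odd m with ⟨c, hc⟩ | ⟨c, hc⟩
  · exfalso
    apply hnt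
    refine ⟨c, ?_⟩
    have h2 : 2*t = 2*(n*c) := by rw [hm, hc]; ring
    exact mul_left_cancel₀ (by norm_num : (2:ℤ) ≠ 0) h2
  · have hn2 : n = 2*(t - n*c) := by
      have h2 : 2*t = 2*(n*c) + n := by rw [hm, hc]; ring
      linarith
    have h2n : (2:ℤ) ∣ n := ⟨t - n*c, hn2⟩
    have hdiv : n/2 = t - n*c := by
      conv_lhs => rw [hn2]
      exact Int.mul_ediv_cancel_left _ (by norm_num)
    exact ⟨h2n, ⟨c, by rw [hdiv]; ring⟩⟩

section unfoldLemmas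
variable (n k l : ℤ)

lemma B_0 : condB n k l 0 ↔ n ∣ (2*k-l) := by unfold condB; rw [if_pos rfl]
lemma B_1 : condB n k l 1 ↔ n ∣ (2*l-k) := by
  unfold condB; rw [if_neg (by decide), if_pos rfl]
lemma B_2 : condB n k l 2 ↔ n ∣ (k+l) := by
  unfold condB; rw [if_neg (by decide), if_neg (by decide)]
lemma D_0 : condD n k l 0 ↔ 2 ∣ n ∧ n ∣ (2*k-l - n/2) := by unfold condD; rw [if_pos rfl]
lemma D_1 : condD n k l 1 ↔ 2 ∣ n ∧ n ∣ (2*l-k - n/2) := by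
  unfold condD; rw [if_neg (by decide), if_pos rfl]
lemma D_2 : condD n k l 2 ↔ 2 ∣ n ∧ n ∣ (k+l - n/2) := by
  unfold condD; rw [if_neg (by decide), if_neg (by decide)]
lemma E_0 : condE n k l 0 ↔ pmMod n 3 (2*k-l) := by unfold condE; rw [if_pos rfl]
lemma E_1 : condE n k l 1 ↔ pmMod n 3 (2*l-k) := by
  unfold condE; rw [if_neg (by decide), if_pos rfl]
lemma E_2 : condE n k l 2 ↔ pmMod n 3 (k+l) := by
  unfold condE; rw [if_neg (by decide), if_neg (by decide)]
lemma F1_0 : condF1 n k l 0 ↔ n ∣ (5*k-l) := by unfold condF1; rw [if_pos rfl]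
lemma F1_1 : condF1 n k l 1 ↔ n ∣ (5*l-4*k) := by
  unfold condF1; rw [if_neg (by decide), if_pos rfl]
lemma F1_2 : condF1 n k l 2 ↔ n ∣ (k+4*l) := by
  unfold condF1; rw [if_neg (by decide), if_neg (by decide)]
lemma F2_0 : condF2 n k l 0 ↔ n ∣ (4*l-5*k) := by unfold condF2; rw [if_pos rfl]
lemma F2_1 : condF2 n k l 1 ↔ n ∣ (4*k+l) := by
  unfold condF2; rw [if_neg (by decide), if_pos rfl]
lemma F2_2 : condF2 n k l 2 ↔ n ∣ (5*l-k) := by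
  unfold condF2; rw [if_neg (by decide), if_neg (by decide)]

end unfoldLemmas

theorem stmt1 (n : ℕ) (hn : 2 ≤ n) (k l : ℤ) (j : ZMod 3) :
    (condE n k l j ∧ condF1 n k l j → condB n k l (j + 1)) ∧
    (condE n k l j ∧ condF2 n k l (-j) → condB n k l (j + 2)) ∧
    ((¬ condB n k l 0 ∧ ¬ condB n k l 1 ∧ ¬ condB n k l 2) →
      (condE n k l j ∧ condF1 n k l (j + 1) → condD n k l (j + 2)) ∧
      (condE n k l j ∧ condF2 n k l (1 - j) → condD n k l (j + 1))) := by
  obtain rfl | rfl | rfl : j = 0 ∨ j = 1 ∨ j = 2 := by revert j; decide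
  · -- j = 0
    rw [show (0:ZMod 3) + 1 = 1 by decide, show (0:ZMod 3) + 2 = 2 by decide,
        show -(0:ZMod 3) = 0 by decide, show (1:ZMod 3) - 0 = 1 by decide]
    simp only [B_0, B_1, B_2, D_1, D_2, E_0, F1_0, F1_1, F2_0, F2_1, pmMod]
    refine ⟨?_, ?_, ?_⟩
    · rintro ⟨⟨h3, he⟩, hf⟩
      exact comb _ _ _ _ (-1) 1 (three_dvd _ _ h3 he) hf (by ring)
    · rintro ⟨⟨h3, he⟩, hf⟩
      exact comb _ _ _ _ 1 1 (three_dvd _ _ h3 he) hf (by ring)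
    · rintro ⟨hB0, hB1, hB2⟩
      constructor
      · rintro ⟨⟨h3, he⟩, hf⟩
        exact halfD _ _ (comb _ _ _ _ 1 1 (three_dvd _ _ h3 he) hf (by ring)) hB2
      · rintro ⟨⟨h3, he⟩, hf⟩
        exact halfD _ _ (comb _ _ _ _ (-1) 1 (three_dvd _ _ h3 he) hf (by ring)) hB1
  · -- j = 1
    rw [show (1:ZMod 3) + 1 = 2 by decide, show (1:ZMod 3) + 2 = 0 by decide,
        show -(1:ZMod 3) = 2 by decide, show (1:ZMod 3) - 1 = 0 by decide]
    simp only [B_0, B_1, B_2, D_0, D_2, E_1, F1_1, F1_2, F2_0, F2_2, pmMod]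
    refine ⟨?_, ?_, ?_⟩
    · rintro ⟨⟨h3, he⟩, hf⟩
      exact comb _ _ _ _ 1 (-1) (three_dvd _ _ h3 he) hf (by ring)
    · rintro ⟨⟨h3, he⟩, hf⟩
      exact comb _ _ _ _ (-1) 1 (three_dvd _ _ h3 he) hf (by ring)
    · rintro ⟨hB0, hB1, hB2⟩
      constructor
      · rintro ⟨⟨h3, he⟩, hf⟩
        exact halfD _ _ (comb _ _ _ _ (-1) 1 (three_dvd _ _ h3 he) hf (by ring)) hB0
      · rintro ⟨⟨h3, he⟩, hf⟩
        exact halfD _ _ (comb _ _ _ _ 1 (-1) (three_dvd _ _ h3 he) hf (by ring)) hB2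
  · -- j = 2
    rw [show (2:ZMod 3) + 1 = 0 by decide, show (2:ZMod 3) + 2 = 1 by decide,
        show -(2:ZMod 3) = 1 by decide, show (1:ZMod 3) - 2 = 2 by decide]
    simp only [B_0, B_1, B_2, D_0, D_1, E_2, F1_0, F1_2, F2_1, F2_2, pmMod]
    refine ⟨?_, ?_, ?_⟩
    · rintro ⟨⟨h3, he⟩, hf⟩
      exact comb _ _ _ _ 1 (-1) (three_dvd _ _ h3 he) hf (by ring)
    · rintro ⟨⟨h3, he⟩, hf⟩
      exact comb _ _ _ _ 1 (-1) (three_dvd _ _ h3 he) hf (by ring)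
    · rintro ⟨hB0, hB1, hB2⟩
      constructor
      · rintro ⟨⟨h3, he⟩, hf⟩
        exact halfD _ _ (comb _ _ _ _ 1 (-1) (three_dvd _ _ h3 he) hf (by ring)) hB1
      · rintro ⟨⟨h3, he⟩, hf⟩
        exact halfD _ _ (comb _ _ _ _ 1 (-1) (three_dvd _ _ h3 he) hf (by ring)) hB0
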